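/- Let A and B be groups and W ⊆ F_∞ a set of words. Regard A and B as subgroups of the verbal product A ∗_W B. The function Ψ : W(A) × W(B) → W(A ∗_W B) defined by Ψ(a,b) := ab is a group isomorphism. -/

import Mathlib

open Monoid
open scoped commutatorElement

/-- The verbal subgroup `W(G)`: the subgroup of `G` generated by all evaluations of the
words of `W` at tuples of elements of `G`. -/
def verbalSubgroup (W : Set (FreeGroup ℕ)) (G : Type*) [Group G] : Subgroup G :=
  Subgroup.closure {x | ∃ w ∈ W, ∃ f : ℕ → G, FreeGroup.lift f w = x}

theorem lift_comp_eval {G H : Type*} [Group G] [Group H] (φ : G →* H) (f : ℕ → G)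
    (w : FreeGroup ℕ) : φ (FreeGroup.lift f w) = FreeGroup.lift (φ ∘ f) w := by
  have h : φ.comp (FreeGroup.lift f) = FreeGroup.lift (φ ∘ f) :=
    FreeGroup.ext_hom _ _ (fun a => by simp)
  exact DFunLike.congr_fun h w

theorem verbalSubgroup_map_le {G H : Type*} [Group G] [Group H] (W : Set (FreeGroup ℕ))
    (φ : G →* H) : (verbalSubgroup W G).map φ ≤ verbalSubgroup W H := by
  rw [verbalSubgroup, MonoidHom.map_closure, Subgroup.closure_le]
  rintro x ⟨y, ⟨w, hw, f, rfl⟩, rfl⟩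
  exact Subgroup.subset_closure ⟨w, hw, φ ∘ f, (lift_comp_eval φ f w).symm⟩

/-- Verbal subgroups are normal. -/
instance verbalSubgroup_normal (W : Set (FreeGroup ℕ)) (G : Type*) [Group G] :
    (verbalSubgroup W G).Normal := by
  constructor
  intro n hn g
  have h := verbalSubgroup_map_le (G := G) (H := G) W (MulAut.conj g).toMonoidHom
  have h2 : (MulAut.conj g).toMonoidHom n ∈ verbalSubgroup W G := h ⟨n, hn, rfl⟩
  simpa using h2

/-- The subgroup `[A,B]` of the free product `A ∗ B` generated by the commutators
`[a,b] = a * b * a⁻¹ * b⁻¹` with `a ∈ A`, `b ∈ B`. -/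
def commSubgroup (A B : Type*) [Group A] [Group B] : Subgroup (Coprod A B) :=
  Subgroup.closure {x | ∃ (a : A) (b : B), x = ⁅(Coprod.inl a : Coprod A B), Coprod.inr b⁆}

/-- The kernel of the verbal product: (the normal closure of) `W(A ∗ B) ∩ [A,B]`.
Since `W(A ∗ B) ∩ [A,B]` is in fact a normal subgroup of `A ∗ B`, taking the normal
closure does not change the subgroup. -/
def verbalProductKer (W : Set (FreeGroup ℕ)) (A B : Type*) [Group A] [Group B] :
    Subgroup (Coprod A B) :=
  Subgroup.normalClosure ((verbalSubgroup W (Coprod A B) ⊓ commSubgroup A B : Subgroup _) : Set _)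

instance verbalProductKer_normal (W : Set (FreeGroup ℕ)) (A B : Type*) [Group A] [Group B] :
    (verbalProductKer W A B).Normal := Subgroup.normalClosure_normal

/-- The verbal product `A ∗_W B := (A ∗ B)/(W(A ∗ B) ∩ [A,B])`. -/
abbrev VerbalProduct (W : Set (FreeGroup ℕ)) (A B : Type*) [Group A] [Group B] : Type _ :=
  Coprod A B ⧸ verbalProductKer W A B

/-- The quotient homomorphism `q : A ∗ B → A ∗_W B`. -/
def vq (W : Set (FreeGroup ℕ)) (A B : Type*) [Group A] [Group B] :
    Coprod A B →* VerbalProduct W A B :=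
  QuotientGroup.mk' (verbalProductKer W A B)

/-- The copy of `A` inside the verbal product `A ∗_W B`. -/
def vinl (W : Set (FreeGroup ℕ)) (A B : Type*) [Group A] [Group B] :
    A →* VerbalProduct W A B := (vq W A B).comp Coprod.inl

/-- The copy of `B` inside the verbal product `A ∗_W B`. -/
def vinr (W : Set (FreeGroup ℕ)) (A B : Type*) [Group A] [Group B] :
    B →* VerbalProduct W A B := (vq W A B).comp Coprod.inr

/-- `[A,B]^w`, the image of `[A,B]` in the verbal product `A ∗_W B`. -/
def commW (W : Set (FreeGroup ℕ)) (A B : Type*) [Group A] [Group B] :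
    Subgroup (VerbalProduct W A B) := (commSubgroup A B).map (vq W A B)

section Aux
variable {A B : Type*} [Group A] [Group B]

theorem comm_le_ker_fst : commSubgroup A B ≤ (Coprod.fst : Coprod A B →* A).ker := by
  rw [commSubgroup, Subgroup.closure_le]
  rintro x ⟨a, b, rfl⟩
  simp [MonoidHom.mem_ker, commutatorElement_def]

theorem comm_le_ker_snd : commSubgroup A B ≤ (Coprod.snd : Coprod A B →* B).ker := by
  rw [commSubgroup, Subgroup.closure_le]
  rintro x ⟨a, b, rfl⟩
  simp [MonoidHom.mem_ker, commutatorElement_def]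

theorem conj_mem_comm (g : Coprod A B) :
    ∀ h ∈ commSubgroup A B, g * h * g⁻¹ ∈ commSubgroup A B := by
  induction g using Coprod.induction_on with
  | inl a =>
    intro h hh
    induction hh using Subgroup.closure_induction with
    | mem x hx =>
      obtain ⟨a', b, rfl⟩ := hx
      have key : Coprod.inl a * ⁅(Coprod.inl a' : Coprod A B), Coprod.inr b⁆ * (Coprod.inl a)⁻¹
          = ⁅(Coprod.inl (a * a') : Coprod A B), Coprod.inr b⁆ *
            ⁅(Coprod.inl a : Coprod A B), Coprod.inr b⁆⁻¹ := by
        rw [map_mul]; group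
      rw [key]
      exact mul_mem (Subgroup.subset_closure ⟨_, _, rfl⟩)
        (inv_mem (Subgroup.subset_closure ⟨_, _, rfl⟩))
    | one => simpa using one_mem _
    | mul x y _ _ hx hy =>
      have : Coprod.inl a * (x * y) * (Coprod.inl a)⁻¹
          = (Coprod.inl a * x * (Coprod.inl a)⁻¹) * (Coprod.inl a * y * (Coprod.inl a)⁻¹) := by
        group
      rw [this]; exact mul_mem hx hy
    | inv x _ hx =>
      have : Coprod.inl a * x⁻¹ * (Coprod.inl a)⁻¹
          = (Coprod.inl a * x * (Coprod.inl a)⁻¹)⁻¹ := by group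
      rw [this]; exact inv_mem hx
  | inr b =>
    intro h hh
    induction hh using Subgroup.closure_induction with
    | mem x hx =>
      obtain ⟨a, b', rfl⟩ := hx
      have key : Coprod.inr b * ⁅(Coprod.inl a : Coprod A B), Coprod.inr b'⁆ * (Coprod.inr b)⁻¹
          = ⁅(Coprod.inl a : Coprod A B), (Coprod.inr b : Coprod A B)⁆⁻¹ *
            ⁅(Coprod.inl a : Coprod A B), (Coprod.inr (b * b') : Coprod A B)⁆ := by
        rw [map_mul]; group
      rw [key]
      exact mul_mem (inv_mem (Subgroup.subset_closure ⟨_, _, rfl⟩))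
        (Subgroup.subset_closure ⟨_, _, rfl⟩)
    | one => simpa using one_mem _
    | mul x y _ _ hx hy =>
      have : Coprod.inr b * (x * y) * (Coprod.inr b)⁻¹
          = (Coprod.inr b * x * (Coprod.inr b)⁻¹) * (Coprod.inr b * y * (Coprod.inr b)⁻¹) := by
        group
      rw [this]; exact mul_mem hx hy
    | inv x _ hx =>
      have : Coprod.inr b * x⁻¹ * (Coprod.inr b)⁻¹
          = (Coprod.inr b * x * (Coprod.inr b)⁻¹)⁻¹ := by group
      rw [this]; exact inv_mem hx
  | mul x y hx hy =>
    intro h hh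
    have : x * y * h * (x * y)⁻¹ = x * (y * h * y⁻¹) * x⁻¹ := by group
    rw [this]; exact hx _ (hy _ hh)

instance commSubgroup_normal : (commSubgroup A B).Normal :=
  ⟨fun n hn g => conj_mem_comm g n hn⟩

theorem exists_decomp (g : Coprod A B) :
    ∃ a b c, c ∈ commSubgroup A B ∧ g = Coprod.inl a * Coprod.inr b * c := by
  induction g using Coprod.induction_on with
  | inl a => exact ⟨a, 1, 1, one_mem _, by simp⟩
  | inr b => exact ⟨1, b, 1, one_mem _, by simp⟩
  | mul x y hx hy =>
    obtain ⟨a1, b1, c1, hc1, rfl⟩ := hx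
    obtain ⟨a2, b2, c2, hc2, rfl⟩ := hy
    have hd : ⁅((Coprod.inl a2 : Coprod A B))⁻¹, (Coprod.inr b1)⁻¹⁆⁻¹ ∈ commSubgroup A B := by
      refine inv_mem (Subgroup.subset_closure ⟨a2⁻¹, b1⁻¹, ?_⟩)
      rw [map_inv, map_inv]
    refine ⟨a1 * a2, b1 * b2,
      ((Coprod.inr b2)⁻¹ * ⁅((Coprod.inl a2 : Coprod A B))⁻¹, (Coprod.inr b1)⁻¹⁆⁻¹ * Coprod.inr b2)
      * ((Coprod.inl a2 * Coprod.inr b2)⁻¹ * c1 * (Coprod.inl a2 * Coprod.inr b2)) * c2,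
      ?_, ?_⟩
    · refine mul_mem (mul_mem ?_ ?_) hc2
      · have := conj_mem_comm ((Coprod.inr b2 : Coprod A B))⁻¹ _ hd
        simpa using this
      · have := conj_mem_comm ((Coprod.inl a2 * Coprod.inr b2 : Coprod A B))⁻¹ _ hc1
        simpa using this
    · rw [map_mul, map_mul]
      group

end Aux


theorem verbalSubgroup_map_of_surjective {G H : Type*} [Group G] [Group H]
    (W : Set (FreeGroup ℕ)) (φ : G →* H) (hφ : Function.Surjective φ) :
    (verbalSubgroup W G).map φ = verbalSubgroup W H := by
  refine le_antisymm (verbalSubgroup_map_le W φ) ?_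
  rw [verbalSubgroup, Subgroup.closure_le]
  rintro x ⟨w, hw, f, rfl⟩
  refine ⟨FreeGroup.lift (fun n => Function.surjInv hφ (f n)) w,
    Subgroup.subset_closure ⟨w, hw, _, rfl⟩, ?_⟩
  rw [lift_comp_eval]
  have he : (⇑φ ∘ fun n => Function.surjInv hφ (f n)) = f :=
    funext fun n => Function.surjInv_eq hφ (f n)
  rw [he]

/-- The map `Ψ : W(A) × W(B) → W(A ∗_W B)`, `Ψ(a,b) = ab`, is a group isomorphism. -/
theorem verbalSubgroup_of_verbalProduct_iso {A B : Type*} [Group A] [Group B]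
    (W : Set (FreeGroup ℕ)) :
    ∃ Ψ : (verbalSubgroup W A × verbalSubgroup W B) ≃*
        verbalSubgroup W (VerbalProduct W A B),
      ∀ (a : verbalSubgroup W A) (b : verbalSubgroup W B),
        (Ψ (a, b) : VerbalProduct W A B) = vinl W A B a * vinr W A B b := by
  classical
  have hkerq : (vq W A B).ker = verbalProductKer W A B := QuotientGroup.ker_mk' _
  have hqsurj : Function.Surjective (vq W A B) := QuotientGroup.mk'_surjective _
  have hinf_ker : ∀ x, x ∈ verbalSubgroup W (Coprod A B) → x ∈ commSubgroup A B →
      vq W A B x = 1 := by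
    intro x h1 h2
    rw [← MonoidHom.mem_ker, hkerq]
    exact Subgroup.subset_normalClosure (Subgroup.mem_inf.mpr ⟨h1, h2⟩)
  have hinlV : ∀ a : verbalSubgroup W A,
      (Coprod.inl (a : A) : Coprod A B) ∈ verbalSubgroup W (Coprod A B) :=
    fun a => verbalSubgroup_map_le W Coprod.inl ⟨(a : A), a.2, rfl⟩
  have hinrV : ∀ b : verbalSubgroup W B,
      (Coprod.inr (b : B) : Coprod A B) ∈ verbalSubgroup W (Coprod A B) :=
    fun b => verbalSubgroup_map_le W Coprod.inr ⟨(b : B), b.2, rfl⟩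
  have hcomm : ∀ (a : verbalSubgroup W A) (b : verbalSubgroup W B),
      Commute (vinl W A B a) (vinr W A B b) := by
    intro a b
    have hW : ⁅(Coprod.inl (a : A) : Coprod A B), (Coprod.inr (b : B) : Coprod A B)⁆ ∈
        verbalSubgroup W (Coprod A B) := by
      rw [commutatorElement_def]
      exact mul_mem (mul_mem (mul_mem (hinlV a) (hinrV b)) (inv_mem (hinlV a)))
        (inv_mem (hinrV b))
    have hC : ⁅(Coprod.inl (a : A) : Coprod A B), (Coprod.inr (b : B) : Coprod A B)⁆ ∈
        commSubgroup A B := Subgroup.subset_closure ⟨_, _, rfl⟩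
    have h1 := hinf_ker _ hW hC
    rw [map_commutatorElement] at h1
    exact commutatorElement_eq_one_iff_commute.mp h1
  let f0 : (verbalSubgroup W A × verbalSubgroup W B) →* VerbalProduct W A B :=
    MonoidHom.noncommCoprod ((vinl W A B).comp (verbalSubgroup W A).subtype)
      ((vinr W A B).comp (verbalSubgroup W B).subtype) (fun a b => hcomm a b)
  have hf0 : ∀ p, f0 p = vinl W A B p.1 * vinr W A B p.2 := fun p => rfl
  have hmem : ∀ p, f0 p ∈ verbalSubgroup W (VerbalProduct W A B) := by
    intro p
    rw [hf0]
    exact mul_mem (verbalSubgroup_map_le W (vinl W A B) ⟨p.1, p.1.2, rfl⟩)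
      (verbalSubgroup_map_le W (vinr W A B) ⟨p.2, p.2.2, rfl⟩)
  let Ψ0 := f0.codRestrict (verbalSubgroup W (VerbalProduct W A B)) hmem
  have hNfst : verbalProductKer W A B ≤ (Coprod.fst : Coprod A B →* A).ker :=
    Subgroup.normalClosure_le_normal (fun x hx => comm_le_ker_fst (Subgroup.mem_inf.mp hx).2)
  have hNsnd : verbalProductKer W A B ≤ (Coprod.snd : Coprod A B →* B).ker :=
    Subgroup.normalClosure_le_normal (fun x hx => comm_le_ker_snd (Subgroup.mem_inf.mp hx).2)
  let pA : VerbalProduct W A B →* A := QuotientGroup.lift _ Coprod.fst hNfst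
  let pB : VerbalProduct W A B →* B := QuotientGroup.lift _ Coprod.snd hNsnd
  have hpA : ∀ g : Coprod A B, pA (vq W A B g) = Coprod.fst g := fun g => rfl
  have hpB : ∀ g : Coprod A B, pB (vq W A B g) = Coprod.snd g := fun g => rfl
  have hinj : Function.Injective Ψ0 := by
    rw [injective_iff_map_eq_one]
    intro p hp
    have hp' : vinl W A B p.1 * vinr W A B p.2 = 1 := by
      have := congrArg Subtype.val hp
      rw [← hf0 p]; exact this
    have ha : (p.1 : A) = 1 := by
      have h1 := congrArg pA hp'
      rw [map_mul, map_one] at h1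
      have e1 : pA (vinl W A B p.1) = (p.1 : A) := hpA (Coprod.inl p.1)
      have e2 : pA (vinr W A B p.2) = 1 := hpA (Coprod.inr p.2)
      rw [e1, e2, mul_one] at h1
      exact h1
    have hb : (p.2 : B) = 1 := by
      have h1 := congrArg pB hp'
      rw [map_mul, map_one] at h1
      have e1 : pB (vinl W A B p.1) = 1 := hpB (Coprod.inl p.1)
      have e2 : pB (vinr W A B p.2) = (p.2 : B) := hpB (Coprod.inr p.2)
      rw [e1, e2, one_mul] at h1
      exact h1
    exact Prod.ext (Subtype.ext ha) (Subtype.ext hb)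
  have hsurj : Function.Surjective Ψ0 := by
    rintro ⟨x, hx⟩
    rw [← verbalSubgroup_map_of_surjective W (vq W A B) hqsurj] at hx
    obtain ⟨y, hy, rfl⟩ := hx
    obtain ⟨a, b, c, hc, rfl⟩ := exists_decomp y
    have hfc : Coprod.fst c = 1 := comm_le_ker_fst hc
    have hsc : Coprod.snd c = 1 := comm_le_ker_snd hc
    have ha : a ∈ verbalSubgroup W A := by
      have h1 : Coprod.fst (Coprod.inl a * Coprod.inr b * c) ∈
          (verbalSubgroup W (Coprod A B)).map (Coprod.fst : Coprod A B →* A) := ⟨_, hy, rfl⟩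
      have h2 : Coprod.fst (Coprod.inl a * Coprod.inr b * c) = a := by
        rw [map_mul, map_mul, hfc]; simp
      rw [h2] at h1
      exact verbalSubgroup_map_le W (Coprod.fst : Coprod A B →* A) h1
    have hb : b ∈ verbalSubgroup W B := by
      have h1 : Coprod.snd (Coprod.inl a * Coprod.inr b * c) ∈
          (verbalSubgroup W (Coprod A B)).map (Coprod.snd : Coprod A B →* B) := ⟨_, hy, rfl⟩
      have h2 : Coprod.snd (Coprod.inl a * Coprod.inr b * c) = b := by
        rw [map_mul, map_mul, hsc]; simp
      rw [h2] at h1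
      exact verbalSubgroup_map_le W (Coprod.snd : Coprod A B →* B) h1
    have hcW : c ∈ verbalSubgroup W (Coprod A B) := by
      have he : c = (Coprod.inl a * Coprod.inr b)⁻¹ * (Coprod.inl a * Coprod.inr b * c) := by
        group
      rw [he]
      exact mul_mem (inv_mem (mul_mem (hinlV ⟨a, ha⟩) (hinrV ⟨b, hb⟩))) hy
    have hc1 : vq W A B c = 1 := hinf_ker c hcW hc
    refine ⟨(⟨a, ha⟩, ⟨b, hb⟩), Subtype.ext ?_⟩
    show f0 (⟨a, ha⟩, ⟨b, hb⟩) = vq W A B (Coprod.inl a * Coprod.inr b * c)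
    rw [hf0, map_mul, map_mul, hc1, mul_one]
    rfl
  exact ⟨MulEquiv.ofBijective Ψ0 ⟨hinj, hsurj⟩, fun a b => rfl⟩
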